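/- Let t be a target distribution with t_1 ≥ t_2 ≥ ⋯ and let M be a positive integer. If p is an M-type distribution minimizing D(q‖t) over all M-type distributions q, then p_i / t_i < e / t_1 for every index i with p_i > 0. In particular, if k is the largest index with p_k > 0, then 1/(M t_k) ≤ e / t_1. -/

import Mathlib

/-- A target distribution: a probability distribution on the positive integers
(indexed here by ℕ) with nonincreasing entries. -/
def IsTargetDist (t : ℕ → ℝ) : Prop :=
  (∀ i, 0 ≤ t i) ∧ (∀ i, t (i + 1) ≤ t i) ∧ HasSum t 1

/-- An `M`-type distribution: every entry is `c_i / M` for a nonnegative integer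
`c_i ≤ M`, and the entries sum to one. -/
def IsMType (M : ℕ) (p : ℕ → ℝ) : Prop :=
  HasSum p 1 ∧ ∃ c : ℕ → ℕ, (∀ i, c i ≤ M) ∧ ∀ i, p i = (c i : ℝ) / M

open Classical in
/-- Informational divergence `D(p‖t) = Σ_{i : p_i > 0} p_i log(p_i / t_i)`
(natural log), valued in the extended reals: it is `⊤` if `p` puts mass where
`t` does not. -/
noncomputable def klE (p t : ℕ → ℝ) : EReal :=
  if ∀ i, 0 < p i → 0 < t i then
    (((∑' i, if 0 < p i then p i * Real.log (p i / t i) else 0 : ℝ) : EReal))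
  else ⊤

lemma aux1 (t0 a δ : ℝ) (ht0 : 0 < t0) (ha : 0 ≤ a) (hδ : 0 < δ) (hu : a + δ ≤ 1) :
    (a + δ) * Real.log ((a + δ) / t0) - a * Real.log (a / t0)
      < δ * (1 - Real.log t0) := by
  have hu0 : 0 < a + δ := by linarith
  have key : (a + δ) * Real.log (a + δ) - a * Real.log a < δ + δ * Real.log (a + δ) := by
    rcases eq_or_lt_of_le ha with h0 | h0
    · simp [← h0]; exact hδ
    · have h1 : Real.log ((a + δ) / a) < (a + δ) / a - 1 :=
        Real.log_lt_sub_one_of_pos (by positivity) (by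
          intro hcontra
          have : a + δ = a := by field_simp at hcontra; linarith
          linarith)
      have h2 : a * Real.log ((a + δ) / a) < a * ((a + δ) / a - 1) :=
        (mul_lt_mul_iff_right₀ h0).2 h1
      rw [Real.log_div (ne_of_gt hu0) (ne_of_gt h0)] at h2
      have h3 : a * ((a + δ) / a - 1) = δ := by field_simp; ring
      nlinarith
  have hlogu : Real.log (a + δ) ≤ 0 := Real.log_nonpos (by linarith) hu
  have e1 : (a + δ) * Real.log ((a + δ) / t0)
      = (a + δ) * Real.log (a + δ) - (a + δ) * Real.log t0 := by
    rw [Real.log_div (ne_of_gt hu0) (ne_of_gt ht0)]; ring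
  have e2 : a * Real.log (a / t0) = a * Real.log a - a * Real.log t0 := by
    rcases eq_or_lt_of_le ha with h0 | h0
    · simp [← h0]
    · rw [Real.log_div (ne_of_gt h0) (ne_of_gt ht0)]; ring
  rw [e1, e2]
  nlinarith [mul_nonpos_of_nonneg_of_nonpos (le_of_lt hδ) hlogu]

lemma aux2 (ti b δ : ℝ) (hti : 0 < ti) (hδ : 0 < δ) (hb : δ ≤ b) :
    (b - δ) * Real.log ((b - δ) / ti) - b * Real.log (b / ti)
      ≤ -(δ * Real.log (b / ti)) := by
  rcases eq_or_lt_of_le hb with h | h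
  · rw [← h]; simp
  · have h1 : Real.log ((b - δ) / ti) ≤ Real.log (b / ti) :=
      Real.log_le_log (div_pos (by linarith) hti) (by gcongr; linarith)
    have h2 := mul_le_mul_of_nonneg_left h1 (by linarith : (0:ℝ) ≤ b - δ)
    nlinarith

lemma mtype_bound (M : ℕ) (hM : 0 < M) (p : ℕ → ℝ) (hp : IsMType M p) :
    ∃ N, ∀ j, N ≤ j → p j = 0 := by
  obtain ⟨hsum, c, hcle, hpc⟩ := hp
  have hMR : (0:ℝ) < M := Nat.cast_pos.mpr hM
  have hs : Summable p := hsum.summable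
  have hev : ∀ᶠ j in Filter.atTop, p j < 1 / M :=
    hs.tendsto_atTop_zero.eventually_lt_const (by positivity)
  obtain ⟨N, hN⟩ := Filter.eventually_atTop.mp hev
  refine ⟨N, fun j hj => ?_⟩
  have hlt := hN j hj
  rw [hpc j] at hlt ⊢
  have hcj : c j = 0 := by
    by_contra hc
    have h1 : (1:ℝ) ≤ c j := Nat.one_le_cast.mpr (Nat.one_le_iff_ne_zero.mpr hc)
    have h2 : (1:ℝ)/M ≤ (c j : ℝ)/M := by gcongr
    linarith
  simp [hcj]

/-- any informational-divergence optimal `M`-type approximation `p`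
of a target distribution `t` (with largest entry `t 0`) satisfies
`p_i / t_i < e / t_1` for every `i` with `p_i > 0`; in particular, if `k` is the
largest index in the support of `p`, then `1/(M t_k) ≤ e / t_1`. -/
theorem stmt14 (t : ℕ → ℝ) (ht : IsTargetDist t) (M : ℕ) (hM : 0 < M)
    (p : ℕ → ℝ) (hp : IsMType M p)
    (hopt : ∀ q, IsMType M q → klE p t ≤ klE q t) :
    (∀ i, 0 < p i → p i / t i < Real.exp 1 / t 0) ∧
    ∀ k, 0 < p k → (∀ j, k < j → p j = 0) →
      1 / ((M : ℝ) * t k) ≤ Real.exp 1 / t 0 := by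
  obtain ⟨hpsum, c, hcle, hpc⟩ := hp
  have hMR : (0:ℝ) < M := Nat.cast_pos.mpr hM
  have hpnn : ∀ j, 0 ≤ p j := fun j => by rw [hpc j]; positivity
  have htanti : Antitone t := antitone_nat_of_succ_le ht.2.1
  -- t 0 > 0
  have ht0 : 0 < t 0 := by
    rcases (ht.1 0).lt_or_eq with h | h
    · exact h
    · exfalso
      have hz : ∀ j, t j = 0 := fun j =>
        le_antisymm (by rw [h]; exact htanti (Nat.zero_le j)) (ht.1 j)
      have : (0:ℝ) = 1 := by
        have h0 : HasSum t 0 := by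
          have : t = fun _ => (0:ℝ) := funext hz
          rw [this]; exact hasSum_zero
        exact h0.unique ht.2.2
      norm_num at this
  -- the all-mass-at-0 distribution is M-type
  have hq0 : IsMType M (fun j => if j = 0 then (1:ℝ) else 0) := by
    refine ⟨hasSum_ite_eq 0 1, fun j => if j = 0 then M else 0, fun j => ?_, fun j => ?_⟩
    · by_cases h : j = 0 <;> simp [h]
    · by_cases h : j = 0 <;> simp [h] <;> field_simp
  -- klE p t is finite, hence p-support ⊆ t-support
  have hq0t : ∀ j, 0 < (if j = 0 then (1:ℝ) else 0) → 0 < t j := by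
    intro j hj
    by_cases hj0 : j = 0
    · rw [hj0]; exact ht0
    · simp [hj0] at hj
  have hpt : ∀ j, 0 < p j → 0 < t j := by
    by_contra hc
    have h1 := hopt _ hq0
    unfold klE at h1
    rw [if_neg hc, if_pos hq0t, top_le_iff] at h1
    exact EReal.coe_ne_top _ h1
  -- main claim
  have main : ∀ i, 0 < p i → p i / t i < Real.exp 1 / t 0 := by
    intro i hi
    by_contra hcon
    push_neg at hcon
    have hti : 0 < t i := hpt i hi
    have he1 : (2:ℝ) ≤ Real.exp 1 := by
      have := Real.add_one_le_exp 1; linarith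
    have hp0le : p 0 ≤ 1 := le_hasSum hpsum 0 (fun j _ => hpnn j)
    have hine0 : i ≠ 0 := by
      intro hieq
      subst hieq
      have : Real.exp 1 ≤ p 0 := by
        have := (div_le_div_iff_of_pos_right ht0).mp hcon
        linarith
      linarith
    set δ : ℝ := 1 / M with hδdef
    have hδ : 0 < δ := by positivity
    have hci : 1 ≤ c i := by
      by_contra hc
      have : c i = 0 := by omega
      rw [hpc i, this] at hi; simp at hi
    have hbδ : δ ≤ p i := by
      rw [hpc i, hδdef]
      gcongr
      exact_mod_cast hci
    have hsum2 : p 0 + p i ≤ 1 := by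
      have h2 := sum_le_hasSum ({0, i} : Finset ℕ) (fun j _ => hpnn j) hpsum
      rwa [Finset.sum_pair (Ne.symm hine0)] at h2
    -- the perturbed distribution q
    set q : ℕ → ℝ := fun j => if j = 0 then p 0 + δ else if j = i then p i - δ else p j
      with hqdef
    have hq0v : q 0 = p 0 + δ := by simp [hqdef]
    have hqiv : q i = p i - δ := by simp [hqdef, hine0]
    have hqov : ∀ j, j ≠ 0 → j ≠ i → q j = p j := by
      intro j h1 h2; simp [hqdef, h1, h2]
    have hqnn : ∀ j, 0 ≤ q j := by
      intro j
      by_cases h1 : j = 0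
      · rw [h1, hq0v]; have := hpnn 0; linarith
      · by_cases h2 : j = i
        · rw [h2, hqiv]; linarith
        · rw [hqov j h1 h2]; exact hpnn j
    have hc0 : c 0 < M := by
      by_contra hcon2
      push_neg at hcon2
      have h1 : (1:ℝ) ≤ p 0 := by
        rw [hpc 0]
        rw [le_div_iff₀ hMR]
        have : (M:ℝ) ≤ c 0 := by exact_mod_cast hcon2
        linarith
      linarith
    have hq : IsMType M q := by
      constructor
      · have hr : HasSum (fun j => (if j = 0 then δ else 0) + -(if j = i then δ else 0))
            (δ + -δ) := (hasSum_ite_eq 0 δ).add ((hasSum_ite_eq i δ).neg)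
        have hps := hpsum.add hr
        have hfe : (fun j => p j + ((if j = 0 then δ else 0) + -(if j = i then δ else 0)))
            = q := by
          funext j
          by_cases h1 : j = 0
          · subst h1; simp [hqdef, Ne.symm hine0]
          · by_cases h2 : j = i
            · subst h2; simp [hqdef, h1]; ring
            · simp [hqdef, h1, h2]
        rw [hfe] at hps
        simpa using hps
      · refine ⟨fun j => if j = 0 then c 0 + 1 else if j = i then c i - 1 else c j,
          fun j => ?_, fun j => ?_⟩
        · show (if j = 0 then c 0 + 1 else if j = i then c i - 1 else c j) ≤ M
          split
          · omega
          · split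
            · exact le_trans (Nat.sub_le _ _) (hcle i)
            · exact hcle j
        · show q j = ((if j = 0 then c 0 + 1 else if j = i then c i - 1 else c j : ℕ) : ℝ) / M
          by_cases h1 : j = 0
          · subst h1
            rw [if_pos rfl, hq0v, hpc 0, hδdef]
            push_cast
            rw [← add_div]
          · by_cases h2 : j = i
            · subst h2
              rw [if_neg h1, if_pos rfl, hqiv, hpc j, hδdef, Nat.cast_sub hci]
              push_cast
              rw [sub_div]
            · rw [if_neg h1, if_neg h2, hqov j h1 h2, hpc j]
    have hqt : ∀ j, 0 < q j → 0 < t j := by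
      intro j hj
      by_cases h1 : j = 0
      · rw [h1]; exact ht0
      · by_cases h2 : j = i
        · rw [h2]; exact hti
        · exact hpt j (by rwa [hqov j h1 h2] at hj)
    -- finite support
    obtain ⟨N0, hN0⟩ := mtype_bound M hM p ⟨hpsum, c, hcle, hpc⟩
    set N : ℕ := max N0 (i + 1) with hNdef
    have hpN : ∀ j, N ≤ j → p j = 0 := fun j hj => hN0 j (le_trans (le_max_left _ _) hj)
    have hqN : ∀ j, N ≤ j → q j = 0 := by
      intro j hj
      have hji : i < j := lt_of_lt_of_le (Nat.lt_succ_self i) (le_trans (le_max_right _ _) hj)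
      have hj0 : j ≠ 0 := by omega
      rw [hqov j hj0 (Nat.ne_of_gt hji)]
      exact hpN j hj
    -- tsum values
    have hifp : ∀ j, (if 0 < p j then p j * Real.log (p j / t j) else 0)
        = p j * Real.log (p j / t j) := by
      intro j
      by_cases h : 0 < p j
      · rw [if_pos h]
      · have : p j = 0 := le_antisymm (not_lt.mp h) (hpnn j)
        rw [if_neg h, this, zero_mul]
    have hifq : ∀ j, (if 0 < q j then q j * Real.log (q j / t j) else 0)
        = q j * Real.log (q j / t j) := by
      intro j
      by_cases h : 0 < q j
      · rw [if_pos h]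
      · have : q j = 0 := le_antisymm (not_lt.mp h) (hqnn j)
        rw [if_neg h, this, zero_mul]
    have hSp : (∑' j, if 0 < p j then p j * Real.log (p j / t j) else 0)
        = ∑ j ∈ Finset.range N, p j * Real.log (p j / t j) := by
      rw [tsum_congr hifp]
      refine tsum_eq_sum (fun j hj => ?_)
      simp only [Finset.mem_range, not_lt] at hj
      rw [hpN j hj, zero_mul]
    have hSq : (∑' j, if 0 < q j then q j * Real.log (q j / t j) else 0)
        = ∑ j ∈ Finset.range N, q j * Real.log (q j / t j) := by
      rw [tsum_congr hifq]
      refine tsum_eq_sum (fun j hj => ?_)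
      simp only [Finset.mem_range, not_lt] at hj
      rw [hqN j hj, zero_mul]
    -- compare the two finite sums
    have hsubset : ({0, i} : Finset ℕ) ⊆ Finset.range N := by
      have hiN : i < N := by rw [hNdef]; omega
      intro j hj
      simp only [Finset.mem_insert, Finset.mem_singleton] at hj
      rcases hj with h | h <;> (subst h; exact Finset.mem_range.mpr (by omega))
    have hdiff : (∑ j ∈ Finset.range N, q j * Real.log (q j / t j))
        - ∑ j ∈ Finset.range N, p j * Real.log (p j / t j)
        = (q 0 * Real.log (q 0 / t 0) - p 0 * Real.log (p 0 / t 0))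
          + (q i * Real.log (q i / t i) - p i * Real.log (p i / t i)) := by
      rw [← Finset.sum_sub_distrib]
      rw [← Finset.sum_subset hsubset (fun j _ hj2 => ?_)]
      · rw [Finset.sum_pair (Ne.symm hine0)]
      · simp only [Finset.mem_insert, Finset.mem_singleton, not_or] at hj2
        rw [hqov j hj2.1 hj2.2]
        ring
    have hterm0 : q 0 * Real.log (q 0 / t 0) - p 0 * Real.log (p 0 / t 0)
        < δ * (1 - Real.log (t 0)) := by
      rw [hq0v]
      exact aux1 (t 0) (p 0) δ ht0 (hpnn 0) hδ (by linarith)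
    have htermi : q i * Real.log (q i / t i) - p i * Real.log (p i / t i)
        ≤ -(δ * Real.log (p i / t i)) := by
      rw [hqiv]
      exact aux2 (t i) (p i) δ hti hδ hbδ
    have hlogcmp : 1 - Real.log (t 0) ≤ Real.log (p i / t i) := by
      have h1 : Real.log (Real.exp 1 / t 0) ≤ Real.log (p i / t i) :=
        Real.log_le_log (div_pos (Real.exp_pos 1) ht0) hcon
      rwa [Real.log_div (Real.exp_ne_zero 1) (ne_of_gt ht0), Real.log_exp] at h1
    have hkey : (∑ j ∈ Finset.range N, q j * Real.log (q j / t j))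
        < ∑ j ∈ Finset.range N, p j * Real.log (p j / t j) := by
      nlinarith [mul_le_mul_of_nonneg_left hlogcmp (le_of_lt hδ)]
    -- contradiction with optimality
    have h1 := hopt q hq
    unfold klE at h1
    rw [if_pos hpt, if_pos hqt] at h1
    rw [EReal.coe_le_coe_iff] at h1
    rw [hSp, hSq] at h1
    linarith
  refine ⟨main, fun k hk _ => ?_⟩
  have htk : 0 < t k := hpt k hk
  have h1 := main k hk
  have hck : 1 ≤ c k := by
    by_contra hc
    have : c k = 0 := by omega
    rw [hpc k, this] at hk; simp at hk
  have h2 : 1 / ((M : ℝ) * t k) ≤ p k / t k := by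
    rw [← div_div]
    gcongr
    rw [hpc k]
    gcongr
    exact_mod_cast hck
  linarith
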